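/- arXiv:1404.2192 — 3 statements merged into one kernel-verified Lean document; each statement's English description precedes it below -/
import Mathlib

section
/- Let s > 1 be a real number and let h : ℍ → ℂ be a continuous function on the upper half plane that is invariant under the action of SL(2,ℤ) by Möbius transformations. Suppose there is a constant C > 0 such that |h(x+iy)| ≤ C·y^s for every point x+iy in the standard fundamental domain F = { x+iy : |x| ≤ 1/2, x²+y² ≥ 1, y > 0 }. Then |h(Ω)| ≤ C·E_s(Ω) for every Ω ∈ ℍ, where E_s is the non-holomorphic Eisenstein series; in particular E_s(Ω) is real and satisfies E_s(x+iy) ≥ y^s for all x+iy ∈ F. -/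
open Real MeasureTheory

/-- Riemann zeta function for real arguments `s > 1`, as a sum. -/
noncomputable def zetaR (s : ℝ) : ℝ := ∑' n : ℕ, 1 / ((n : ℝ) + 1) ^ s

/-- The non-holomorphic Eisenstein series `E_s(z)` (real-valued), for `s > 1`. -/
noncomputable def eis:=fun (s : ℝ) (z : ℂ) =>
  (1 / (2 * zetaR (2 * s))) *
    ∑' p : {p : ℤ × ℤ // p ≠ 0},
      z.im ^ s / ‖(p.1.1 : ℂ) * z + (p.1.2 : ℂ)‖ ^ (2 * s)

open UpperHalfPlane in
lemma eis_summable (s : ℝ) (hs : 1 < s) (z : ℍ) :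
    Summable (fun q : ℤ × ℤ =>
      z.im ^ s / ‖(q.1 : ℂ) * (z : ℂ) + (q.2 : ℂ)‖ ^ (2 * s)) := by
  have hk : (2:ℝ) < 2 * s := by linarith
  have h1 : Summable fun x : Fin 2 → ℤ =>
      z.im ^ s * (EisensteinSeries.r z ^ (-(2*s)) * ‖x‖ ^ (-(2*s))) :=
    ((EisensteinSeries.summable_one_div_norm_rpow hk).mul_left _).mul_left _
  have h2 := ((finTwoArrowEquiv ℤ).symm.summable_iff
    (f := fun x : Fin 2 → ℤ =>
      z.im ^ s * (EisensteinSeries.r z ^ (-(2*s)) * ‖x‖ ^ (-(2*s))))).mpr h1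
  refine Summable.of_nonneg_of_le (fun q => by positivity) (fun q => ?_) h2
  have hb := EisensteinSeries.summand_bound z (k := 2*s) (by linarith) ![q.1, q.2]
  simp only [Matrix.cons_val_zero, Matrix.cons_val_one, Matrix.head_cons] at hb
  have habs : (0:ℝ) ≤ ‖(q.1 : ℂ) * (z : ℂ) + (q.2 : ℂ)‖ :=
    norm_nonneg _
  have : z.im ^ s / ‖(q.1 : ℂ) * (z : ℂ) + (q.2 : ℂ)‖ ^ (2 * s)
      = z.im ^ s * ‖(q.1 : ℂ) * (z : ℂ) + (q.2 : ℂ)‖ ^ (-(2 * s)) := by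
    rw [Real.rpow_neg habs, div_eq_mul_inv]
  rw [this]
  have him : (0:ℝ) ≤ z.im ^ s := Real.rpow_nonneg z.im_pos.le _
  exact mul_le_mul_of_nonneg_left hb him

lemma zetaR_summable (s : ℝ) (hs : 1 < s) :
    Summable (fun n : ℕ => 1 / ((n : ℝ) + 1) ^ s) := by
  have h := Real.summable_one_div_nat_rpow.mpr hs
  have h2 := (summable_nat_add_iff (f := fun n : ℕ => 1 / (n : ℝ) ^ s) 1).mpr h
  refine h2.congr fun n => ?_
  push_cast
  ring_nf

lemma zetaR_pos (s : ℝ) (hs : 1 < s) : 0 < zetaR s := by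
  refine Summable.tsum_pos (zetaR_summable s hs) (fun i => by positivity) 0 (by positivity)

lemma hasSum_int (s : ℝ) (hs : 1 < s) :
    HasSum (fun n : ℤ => 1 / |(n : ℝ)| ^ s) (2 * zetaR s) := by
  have hZ : HasSum (fun n : ℕ => 1 / ((n : ℝ) + 1) ^ s) (zetaR s) :=
    (zetaR_summable s hs).hasSum
  have hs0 : s ≠ 0 := by linarith
  have hpos : HasSum (fun n : ℕ => 1 / |((n : ℤ) : ℝ)| ^ s) (zetaR s) := by
    have h1 : HasSum (fun n : ℕ => (fun m : ℕ => 1 / |((m : ℤ) : ℝ)| ^ s) (n + 1))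
        (zetaR s) := by
      refine hZ.congr_fun fun n => ?_
      push_cast
      rw [abs_of_nonneg (by positivity)]
    have := (hasSum_nat_add_iff (f := fun m : ℕ => 1 / |((m : ℤ) : ℝ)| ^ s) 1).mp h1
    simpa [Real.zero_rpow hs0] using this
  have hneg : HasSum (fun n : ℕ => 1 / |((-((n : ℤ) + 1)) : ℝ)| ^ s) (zetaR s) := by
    refine hZ.congr_fun fun n => ?_
    push_cast
    rw [abs_neg, abs_of_nonneg (by positivity)]
  have := HasSum.of_nat_of_neg_add_one (f := fun n : ℤ => 1 / |(n : ℝ)| ^ s) hpos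
    (by exact_mod_cast hneg)
  rwa [two_mul]

open UpperHalfPlane in
lemma eis_ge (s : ℝ) (hs : 1 < s) (z : ℍ) (p : ℤ × ℤ) (hp : p ≠ 0) :
    z.im ^ s / ‖(p.1 : ℂ) * (z : ℂ) + (p.2 : ℂ)‖ ^ (2 * s)
      ≤ eis s (z : ℂ) := by
  have hk1 : (1:ℝ) < 2 * s := by linarith
  have hk0 : (2 * s : ℝ) ≠ 0 := by linarith
  set Z := zetaR (2 * s) with hZdef
  have hZpos : 0 < Z := zetaR_pos _ hk1
  set F : ℤ × ℤ → ℝ := fun q =>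
    z.im ^ s / ‖(q.1 : ℂ) * (z : ℂ) + (q.2 : ℂ)‖ ^ (2 * s) with hFdef
  have hF0 : F 0 = 0 := by
    simp [hFdef, Real.zero_rpow hk0]
  have hFnn : ∀ q, 0 ≤ F q := fun q => by
    have : (0:ℝ) ≤ z.im := z.im_pos.le
    positivity
  have hFsum : Summable F := eis_summable s hs z
  -- the sum over nonzero pairs equals the full sum
  have hsub : (∑' q : {q : ℤ × ℤ // q ≠ 0}, F q.val) = ∑' q : ℤ × ℤ, F q := by
    exact tsum_subtype_eq_of_support_subset (s := {q : ℤ × ℤ | q ≠ 0})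
      (fun q hq h0 => (Function.mem_support.mp hq) (by rw [h0]; exact hF0))
  -- multiples of p
  have hG : ∀ n : ℤ, F (n * p.1, n * p.2) = (1 / |(n : ℝ)| ^ (2 * s)) * F p := by
    intro n
    have habs : ‖((n * p.1 : ℤ) : ℂ) * (z : ℂ) + ((n * p.2 : ℤ) : ℂ)‖
        = |(n : ℝ)| * ‖(p.1 : ℂ) * (z : ℂ) + (p.2 : ℂ)‖ := by
      have : (((n * p.1 : ℤ) : ℂ) * (z : ℂ) + ((n * p.2 : ℤ) : ℂ))
          = (n : ℂ) * ((p.1 : ℂ) * (z : ℂ) + (p.2 : ℂ)) := by push_cast; ring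
      rw [this, norm_mul, Complex.norm_intCast]
    simp only [hFdef]
    rw [habs, Real.mul_rpow (abs_nonneg _) (norm_nonneg _),
      div_mul_eq_div_div_swap, one_div_mul_eq_div]
  have hGsum : HasSum (fun n : ℤ => F (n * p.1, n * p.2)) (2 * Z * F p) := by
    simp only [hG]
    exact (hasSum_int (2 * s) hk1).mul_right (F p)
  have hp' : p.1 ≠ 0 ∨ p.2 ≠ 0 := by
    by_contra hcon
    push_neg at hcon
    exact hp (Prod.ext hcon.1 hcon.2)
  have hinj : Function.Injective (fun n : ℤ => ((n * p.1, n * p.2) : ℤ × ℤ)) := by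
    intro a b hab
    simp only [Prod.mk.injEq] at hab
    rcases hp' with h | h
    · exact mul_right_cancel₀ h hab.1
    · exact mul_right_cancel₀ h hab.2
  have hle : 2 * Z * F p ≤ ∑' q : ℤ × ℤ, F q := by
    have := Summable.tsum_le_tsum_of_inj (fun n : ℤ => ((n * p.1, n * p.2) : ℤ × ℤ)) hinj
      (fun c _ => hFnn c) (fun n => le_rfl) hGsum.summable hFsum
    rwa [hGsum.tsum_eq] at this
  have heq : eis s (z : ℂ) = (1 / (2 * Z)) * ∑' q : ℤ × ℤ, F q := by
    rw [eis, ← hsub]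
    simp only [hFdef, UpperHalfPlane.coe_im]
    rfl
  rw [heq]
  have : F p = (1 / (2 * Z)) * (2 * Z * F p) := by
    field_simp
  calc F p = (1 / (2 * Z)) * (2 * Z * F p) := this
    _ ≤ (1 / (2 * Z)) * ∑' q : ℤ × ℤ, F q := by
        apply mul_le_mul_of_nonneg_left hle
        positivity

/-- an `SL(2,ℤ)`-invariant function bounded by `C y^s` on the
fundamental domain is bounded by `C E_s` everywhere on `ℍ`; moreover `E_s ≥ y^s`
on the fundamental domain. -/
theorem bounded_by_eisenstein (s : ℝ) (hs : 1 < s) (h : UpperHalfPlane → ℂ)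
    (hcont : Continuous h)
    (hinv : ∀ (γ : Matrix.SpecialLinearGroup (Fin 2) ℤ) (z : UpperHalfPlane),
      h (γ • z) = h z)
    (C : ℝ) (hC : 0 < C)
    (hbound : ∀ z : UpperHalfPlane, |z.re| ≤ 1 / 2 → 1 ≤ z.re ^ 2 + z.im ^ 2 →
      ‖h z‖ ≤ C * z.im ^ s) :
    (∀ z : UpperHalfPlane, ‖h z‖ ≤ C * eis s (z : ℂ)) ∧
    (∀ z : UpperHalfPlane, |z.re| ≤ 1 / 2 → 1 ≤ z.re ^ 2 + z.im ^ 2 →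
      z.im ^ s ≤ eis s (z : ℂ)) := by
  have key2 : ∀ z : UpperHalfPlane, z.im ^ s ≤ eis s (z : ℂ) := by
    intro z
    have := eis_ge s hs z (0, 1) (by simp [Prod.ext_iff])
    simpa using this
  refine ⟨?_, fun z _ _ => key2 z⟩
  intro z
  obtain ⟨γ, hγ⟩ := ModularGroup.exists_smul_mem_fd z
  set w := γ • z with hw
  rw [ModularGroup.fd, Set.mem_setOf_eq] at hγ
  have hre : |w.re| ≤ 1 / 2 := hγ.2
  have hnorm : 1 ≤ w.re ^ 2 + w.im ^ 2 := by
    have := hγ.1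
    rw [Complex.normSq_apply] at this
    rw [pow_two, pow_two]
    simpa [UpperHalfPlane.coe_re, UpperHalfPlane.coe_im] using this
  have h1 : ‖h z‖ ≤ C * w.im ^ s := by
    rw [← hinv γ z]
    exact hbound w hre hnorm
  set p : ℤ × ℤ := (γ 1 0, γ 1 1) with hpdef
  have hp : p ≠ 0 := by
    intro h0
    rw [Prod.ext_iff] at h0
    have hdet := γ.2
    rw [Matrix.det_fin_two] at hdet
    simp only [hpdef, Prod.fst_zero, Prod.snd_zero] at h0
    rw [h0.1, h0.2] at hdet
    simp at hdet
  have h2 : w.im = z.im / Complex.normSq (UpperHalfPlane.denom γ z) :=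
    ModularGroup.im_smul_eq_div_normSq γ z
  have h3 : w.im ^ s
      = z.im ^ s / ‖(p.1 : ℂ) * (z : ℂ) + (p.2 : ℂ)‖ ^ (2 * s) := by
    rw [h2, ModularGroup.denom_apply]
    set d : ℂ := ((γ 1 0 : ℤ) : ℂ) * (z : ℂ) + ((γ 1 1 : ℤ) : ℂ) with hd
    have hnsq : Complex.normSq d = ‖d‖ ^ 2 := (Complex.sq_norm d).symm
    rw [hnsq, Real.div_rpow z.im_pos.le (by positivity)]
    congr 1
    rw [← Real.rpow_natCast ‖d‖ 2, ← Real.rpow_mul (norm_nonneg _)]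
    norm_num
  have h4 : w.im ^ s ≤ eis s (z : ℂ) := by
    rw [h3]
    exact eis_ge s hs z p hp
  calc ‖h z‖ ≤ C * w.im ^ s := h1
    _ ≤ C * eis s (z : ℂ) := mul_le_mul_of_nonneg_left h4 hC.le
end

section
/- Let n be an integer (possibly zero) and let g : (0,∞) → ℂ be a twice differentiable function satisfying the homogeneous ordinary differential equation y²·g''(y) = (12 + 4π²n²y²)·g(y) for all y > 0. If there exists a constant C > 0 such that |g(y)| ≤ C·y³ for all y ≥ 1 and |g(y)| ≤ C·y^{−2} for all 0 < y ≤ 1, then g is identically zero. -/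
open Real

private lemma phi_deriv1 (ε y : ℝ) (hy : y ≠ 0) :
    HasDerivAt (fun z : ℝ => ε * z ^ 4 + ε * z ^ (-3 : ℤ))
      (4 * ε * y ^ 3 + -3 * ε * y ^ (-4 : ℤ)) y := by
  have h1 : HasDerivAt (fun z : ℝ => z ^ 4) (4 * y ^ 3 : ℝ) y := by
    simpa using hasDerivAt_pow 4 y
  have h2 : HasDerivAt (fun z : ℝ => z ^ (-3 : ℤ)) ((-3 : ℝ) * y ^ (-4 : ℤ)) y := by
    have := hasDerivAt_zpow (-3) y (Or.inl hy)
    norm_num at this ⊢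
    exact this
  exact ((h1.const_mul ε).add (h2.const_mul ε)).congr_deriv (by ring)

private lemma phi_deriv2 (ε y : ℝ) (hy : y ≠ 0) :
    HasDerivAt (fun z : ℝ => 4 * ε * z ^ 3 + -3 * ε * z ^ (-4 : ℤ))
      (12 * ε * y ^ 2 + 12 * ε * y ^ (-5 : ℤ)) y := by
  have h1 : HasDerivAt (fun z : ℝ => z ^ 3) (3 * y ^ 2 : ℝ) y := by
    simpa using hasDerivAt_pow 3 y
  have h2 : HasDerivAt (fun z : ℝ => z ^ (-4 : ℤ)) ((-4 : ℝ) * y ^ (-5 : ℤ)) y := by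
    have := hasDerivAt_zpow (-4) y (Or.inl hy)
    norm_num at this ⊢
    exact this
  exact ((h1.const_mul (4 * ε)).add (h2.const_mul (-3 * ε))).congr_deriv (by ring)

private lemma aux_upper (K : ℝ) (hK : 0 ≤ K) (f : ℝ → ℝ)
    (hd1 : ∀ y : ℝ, 0 < y → DifferentiableAt ℝ f y)
    (hd2 : ∀ y : ℝ, 0 < y → DifferentiableAt ℝ (deriv f) y)
    (hode : ∀ y : ℝ, 0 < y → y ^ 2 * deriv (deriv f) y = (12 + K * y ^ 2) * f y)
    (C : ℝ) (hC : 0 < C)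
    (hinfty : ∀ y : ℝ, 1 ≤ y → f y ≤ C * y ^ 3)
    (hzero : ∀ y : ℝ, 0 < y → y ≤ 1 → f y ≤ C * y ^ (-2 : ℤ))
    (ε : ℝ) (hε : 0 < ε) (y₀ : ℝ) (hy₀ : 0 < y₀) :
    f y₀ ≤ ε * y₀ ^ 4 + ε * y₀ ^ (-3 : ℤ) := by
  by_contra hcon
  push_neg at hcon
  set φ : ℝ → ℝ := fun z => ε * z ^ 4 + ε * z ^ (-3 : ℤ) with hφdef
  set h : ℝ → ℝ := fun z => f z - φ z with hhdef
  have hφeq : ∀ z : ℝ, φ z = ε * z ^ 4 + ε * z ^ (-3 : ℤ) := fun z => rfl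
  have hheq : ∀ z : ℝ, h z = f z - (ε * z ^ 4 + ε * z ^ (-3 : ℤ)) := fun z => rfl
  have hφpos : ∀ y : ℝ, 0 < y → 0 < φ y := by
    intro y hy
    have : (0:ℝ) < y ^ (-3 : ℤ) := zpow_pos hy _
    have : (0:ℝ) < y ^ 4 := by positivity
    rw [hφeq]
    have h1 : (0:ℝ) < y ^ (-3 : ℤ) := zpow_pos hy _
    have h2 : (0:ℝ) < y ^ 4 := by positivity
    nlinarith
  have hhy₀ : 0 < h y₀ := by rw [hheq]; linarith
  -- continuity of h on positive reals
  have hcont : ∀ y : ℝ, 0 < y → ContinuousAt h y := by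
    intro y hy
    have h1 : ContinuousAt f y := (hd1 y hy).continuousAt
    have h2 : ContinuousAt φ y := (phi_deriv1 ε y hy.ne').differentiableAt.continuousAt
    exact h1.sub h2
  set δ : ℝ := min y₀ (min 1 (ε / (2 * C))) with hδdef
  set M : ℝ := max y₀ (max 1 (2 * C / ε)) with hMdef
  have hδpos : 0 < δ := by
    apply lt_min hy₀
    apply lt_min one_pos
    positivity
  have hδ1 : δ ≤ 1 := le_trans (min_le_right _ _) (min_le_left _ _)
  have hδy : δ ≤ y₀ := min_le_left _ _
  have hδε : C * δ < ε := by
    have h1 : δ ≤ ε / (2 * C) := le_trans (min_le_right _ _) (min_le_right _ _)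
    have h2 : C * δ ≤ C * (ε / (2 * C)) := by nlinarith
    have : C * (ε / (2 * C)) = ε / 2 := by field_simp
    linarith
  have hM1 : (1:ℝ) ≤ M := le_trans (le_max_left _ _) (le_max_right _ _)
  have hMy : y₀ ≤ M := le_max_left _ _
  have hMε : C < ε * M := by
    have h1 : 2 * C / ε ≤ M := le_trans (le_max_right _ _) (le_max_right _ _)
    have hM0 : (0:ℝ) < M := lt_of_lt_of_le one_pos hM1
    nlinarith [div_le_iff₀ hε |>.mp h1]
  have hhδ : h δ < 0 := by
    have h1 : f δ ≤ C * δ ^ (-2 : ℤ) := hzero δ hδpos hδ1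
    have e2 : δ ^ (-2 : ℤ) = (δ ^ 2)⁻¹ := by
      rw [show ((-2 : ℤ)) = -(2 : ℕ) by norm_num, zpow_neg, zpow_natCast]
    have e3 : δ ^ (-3 : ℤ) = (δ ^ 3)⁻¹ := by
      rw [show ((-3 : ℤ)) = -(3 : ℕ) by norm_num, zpow_neg, zpow_natCast]
    have h2 : C * δ ^ (-2 : ℤ) < ε * δ ^ (-3 : ℤ) := by
      rw [e2, e3, show C * (δ ^ 2)⁻¹ = C / δ ^ 2 by ring,
        show ε * (δ ^ 3)⁻¹ = ε / δ ^ 3 by ring,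
        div_lt_div_iff₀ (by positivity) (by positivity)]
      nlinarith [mul_lt_mul_of_pos_right hδε (by positivity : (0:ℝ) < δ ^ 2)]
    have h3 : (0:ℝ) < ε * δ ^ 4 := by positivity
    rw [hheq]
    linarith
  have hhM : h M < 0 := by
    have h1 : f M ≤ C * M ^ 3 := hinfty M hM1
    have hM0 : (0:ℝ) < M := lt_of_lt_of_le one_pos hM1
    have h2 : C * M ^ 3 < ε * M ^ 4 := by
      nlinarith [mul_lt_mul_of_pos_right hMε (pow_pos hM0 3)]
    have h3 : (0:ℝ) < ε * M ^ (-3 : ℤ) := by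
      have h4 : (0:ℝ) < M ^ (-3 : ℤ) := zpow_pos (lt_of_lt_of_le one_pos hM1) (-3 : ℤ)
      nlinarith
    rw [hheq]
    nlinarith
  -- the sets on which h is nonpositive, to the left and right of y₀
  set S₁ : Set ℝ := Set.Icc δ y₀ ∩ h ⁻¹' Set.Iic 0 with hS₁def
  set S₂ : Set ℝ := Set.Icc y₀ M ∩ h ⁻¹' Set.Iic 0 with hS₂def
  have hcontIcc : ∀ u v : ℝ, 0 < u → ContinuousOn h (Set.Icc u v) := by
    intro u v hu
    intro x hx
    exact (hcont x (lt_of_lt_of_le hu hx.1)).continuousWithinAt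
  have hS₁closed : IsClosed S₁ :=
    (hcontIcc δ y₀ hδpos).preimage_isClosed_of_isClosed isClosed_Icc isClosed_Iic
  have hS₂closed : IsClosed S₂ :=
    (hcontIcc y₀ M hy₀).preimage_isClosed_of_isClosed isClosed_Icc isClosed_Iic
  have hS₁ne : S₁.Nonempty := ⟨δ, ⟨le_refl δ, hδy⟩, le_of_lt hhδ⟩
  have hS₂ne : S₂.Nonempty := ⟨M, ⟨hMy, le_refl M⟩, le_of_lt hhM⟩
  have hS₁bdd : BddAbove S₁ := ⟨y₀, fun x hx => hx.1.2⟩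
  have hS₂bdd : BddBelow S₂ := ⟨y₀, fun x hx => hx.1.1⟩
  set a : ℝ := sSup S₁ with hadef
  set b : ℝ := sInf S₂ with hbdef
  have haS : a ∈ S₁ := hS₁closed.csSup_mem hS₁ne hS₁bdd
  have hbS : b ∈ S₂ := hS₂closed.csInf_mem hS₂ne hS₂bdd
  have hay : a < y₀ := lt_of_le_of_ne haS.1.2 (by
    intro hh; rw [hh] at haS; exact absurd haS.2 (not_le.mpr hhy₀))
  have hby : y₀ < b := lt_of_le_of_ne hbS.1.1 (by
    intro hh; rw [← hh] at hbS; exact absurd hbS.2 (not_le.mpr hhy₀))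
  have hab : a < b := lt_trans hay hby
  have haδ : δ ≤ a := haS.1.1
  have hapos : 0 < a := lt_of_lt_of_le hδpos haδ
  have hbM : b ≤ M := hbS.1.2
  -- h is positive on (a, b)
  have hpos : ∀ y ∈ Set.Ioo a b, 0 < h y := by
    intro y hy
    by_contra hle
    push_neg at hle
    rcases le_total y y₀ with hc | hc
    · have hmem : y ∈ S₁ := ⟨⟨le_trans haδ hy.1.le, hc⟩, hle⟩
      exact absurd (le_csSup hS₁bdd hmem) (not_le.mpr hy.1)
    · have hmem : y ∈ S₂ := ⟨⟨hc, le_trans hy.2.le hbM⟩, hle⟩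
      exact absurd (csInf_le hS₂bdd hmem) (not_le.mpr hy.2)
  -- second derivative of h is positive on (a, b)
  have hd2h : ∀ x ∈ Set.Ioo a b, 0 < deriv^[2] h x := by
    intro x hx
    have hx0 : 0 < x := lt_trans hapos hx.1
    -- first derivative of h near positive points
    have hDh : ∀ z : ℝ, 0 < z →
        deriv h z = deriv f z - (4 * ε * z ^ 3 + -3 * ε * z ^ (-4 : ℤ)) := by
      intro z hz
      exact ((hd1 z hz).hasDerivAt.sub (phi_deriv1 ε z hz.ne')).deriv
    have heq : deriv h =ᶠ[nhds x]
        fun z => deriv f z - (4 * ε * z ^ 3 + -3 * ε * z ^ (-4 : ℤ)) := by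
      filter_upwards [Ioi_mem_nhds hx0] with z hz
      exact hDh z hz
    have hD2 : deriv (deriv h) x =
        deriv (deriv f) x - (12 * ε * x ^ 2 + 12 * ε * x ^ (-5 : ℤ)) := by
      rw [heq.deriv_eq]
      exact ((hd2 x hx0).hasDerivAt.sub (phi_deriv2 ε x hx0.ne')).deriv
    have e1 : x ^ 2 * x ^ (-5 : ℤ) = x ^ (-3 : ℤ) := by
      rw [← zpow_natCast x 2, ← zpow_add₀ hx0.ne']
      norm_num
    have hX : x ^ 2 * deriv (deriv h) x
        = (12 + K * x ^ 2) * f x - 12 * (ε * x ^ 4 + ε * x ^ (-3 : ℤ)) := by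
      rw [hD2, mul_sub, hode x hx0]
      linear_combination (-12 * ε) * e1
    have hhx : 0 < h x := hpos x hx
    have hφx : 0 < φ x := hφpos x hx0
    have hφxe := hφeq x
    have hhxe := hheq x
    have hfx : 0 < f x := by rw [hhxe] at hhx; linarith
    have hKx : 0 ≤ K * x ^ 2 * f x := by positivity
    have hx2pos : (0:ℝ) < x ^ 2 := by positivity
    have hpos2 : 0 < x ^ 2 * deriv (deriv h) x := by rw [hX]; nlinarith
    have hd2x : 0 < deriv (deriv h) x := by
      by_contra hle
      push_neg at hle
      have h5 := mul_le_mul_of_nonneg_left hle hx2pos.le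
      rw [mul_zero] at h5
      linarith
    have hit : deriv^[2] h = deriv (deriv h) := by
      rw [show (2:ℕ) = 1 + 1 from rfl, Function.iterate_succ_apply', Function.iterate_one]
    rw [hit]
    exact hd2x
  -- h is convex on [a, b], hence h y₀ ≤ max (h a) (h b) ≤ 0, contradiction
  have hconv : StrictConvexOn ℝ (Set.Icc a b) h := by
    apply strictConvexOn_of_deriv2_pos (convex_Icc a b) (hcontIcc a b hapos)
    intro x hx
    rw [interior_Icc] at hx
    exact hd2h x hx
  have hseg : y₀ ∈ segment ℝ a b := by
    rw [segment_eq_Icc hab.le]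
    exact ⟨hay.le, hby.le⟩
  have := hconv.convexOn.le_on_segment (Set.left_mem_Icc.mpr hab.le)
    (Set.right_mem_Icc.mpr hab.le) hseg
  have hmax : max (h a) (h b) ≤ 0 := max_le haS.2 hbS.2
  linarith

private lemma aux_zero (K : ℝ) (hK : 0 ≤ K) (f : ℝ → ℝ)
    (hd1 : ∀ y : ℝ, 0 < y → DifferentiableAt ℝ f y)
    (hd2 : ∀ y : ℝ, 0 < y → DifferentiableAt ℝ (deriv f) y)
    (hode : ∀ y : ℝ, 0 < y → y ^ 2 * deriv (deriv f) y = (12 + K * y ^ 2) * f y)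
    (C : ℝ) (hC : 0 < C)
    (hinfty : ∀ y : ℝ, 1 ≤ y → |f y| ≤ C * y ^ 3)
    (hzero : ∀ y : ℝ, 0 < y → y ≤ 1 → |f y| ≤ C * y ^ (-2 : ℤ)) :
    ∀ y : ℝ, 0 < y → f y = 0 := by
  have hneg_deriv : (deriv fun z => -f z) = fun z => -deriv f z := deriv.neg'
  have hd1' : ∀ y : ℝ, 0 < y → DifferentiableAt ℝ (fun z => -f z) y :=
    fun y hy => (hd1 y hy).neg
  have hd2' : ∀ y : ℝ, 0 < y → DifferentiableAt ℝ (deriv fun z => -f z) y := by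
    intro y hy
    rw [hneg_deriv]
    exact (hd2 y hy).neg
  have hode' : ∀ y : ℝ, 0 < y →
      y ^ 2 * deriv (deriv fun z => -f z) y = (12 + K * y ^ 2) * (-f y) := by
    intro y hy
    rw [hneg_deriv]
    have : deriv (fun z => -deriv f z) y = -deriv (deriv f) y := deriv.neg
    rw [this]
    have := hode y hy
    ring_nf
    ring_nf at this
    linarith
  intro y hy
  have hA : ∀ ε : ℝ, 0 < ε → f y ≤ ε * y ^ 4 + ε * y ^ (-3 : ℤ) := by
    intro ε hε
    exact aux_upper K hK f hd1 hd2 hode C hC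
      (fun z hz => le_trans (le_abs_self _) (hinfty z hz))
      (fun z hz hz1 => le_trans (le_abs_self _) (hzero z hz hz1)) ε hε y hy
  have hB : ∀ ε : ℝ, 0 < ε → -f y ≤ ε * y ^ 4 + ε * y ^ (-3 : ℤ) := by
    intro ε hε
    exact aux_upper K hK (fun z => -f z) hd1' hd2' hode' C hC
      (fun z hz => le_trans (neg_le_abs _) (hinfty z hz))
      (fun z hz hz1 => le_trans (neg_le_abs _) (hzero z hz hz1)) ε hε y hy
  by_contra hne
  have hc : 0 < |f y| := abs_pos.mpr hne
  have hypos : (0:ℝ) < y ^ 4 + y ^ (-3 : ℤ) := by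
    have := zpow_pos hy (-3 : ℤ)
    positivity
  set ε : ℝ := |f y| / (2 * (y ^ 4 + y ^ (-3 : ℤ))) with hεdef
  have hε : 0 < ε := by positivity
  have h1 := hA ε hε
  have h2 := hB ε hε
  have habs : |f y| ≤ ε * (y ^ 4 + y ^ (-3 : ℤ)) := by
    rw [abs_le']
    constructor <;> [skip; skip] <;> linarith [h1, h2]
  have : ε * (y ^ 4 + y ^ (-3 : ℤ)) = |f y| / 2 := by
    rw [hεdef]; field_simp
  rw [this] at habs
  linarith

private lemma clm_ode (K : ℝ) (g : ℝ → ℂ) (L : ℂ →L[ℝ] ℝ)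
    (hd1 : ∀ y : ℝ, 0 < y → DifferentiableAt ℝ g y)
    (hd2 : ∀ y : ℝ, 0 < y → DifferentiableAt ℝ (deriv g) y)
    (hode : ∀ y : ℝ, 0 < y →
      (y : ℂ) ^ 2 * deriv (deriv g) y = (((12 : ℝ) + K * y ^ 2 : ℝ) : ℂ) * g y) :
    (∀ y : ℝ, 0 < y → DifferentiableAt ℝ (fun z => L (g z)) y) ∧
    (∀ y : ℝ, 0 < y → DifferentiableAt ℝ (deriv fun z => L (g z)) y) ∧
    (∀ y : ℝ, 0 < y →
      y ^ 2 * deriv (deriv fun z => L (g z)) y = (12 + K * y ^ 2) * L (g y)) := by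
  have hD1 : ∀ y : ℝ, 0 < y → HasDerivAt (fun z => L (g z)) (L (deriv g y)) y :=
    fun y hy => L.hasFDerivAt.comp_hasDerivAt y (hd1 y hy).hasDerivAt
  have hD2 : ∀ y : ℝ, 0 < y →
      HasDerivAt (fun z => L (deriv g z)) (L (deriv (deriv g) y)) y :=
    fun y hy => L.hasFDerivAt.comp_hasDerivAt y (hd2 y hy).hasDerivAt
  have heq : ∀ y : ℝ, 0 < y →
      (deriv fun z => L (g z)) =ᶠ[nhds y] fun z => L (deriv g z) := by
    intro y hy
    filter_upwards [Ioi_mem_nhds hy] with z hz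
    exact (hD1 z hz).deriv
  refine ⟨fun y hy => (hD1 y hy).differentiableAt, ?_, ?_⟩
  · intro y hy
    exact (hD2 y hy).differentiableAt.congr_of_eventuallyEq (heq y hy)
  · intro y hy
    have h2 : deriv (deriv fun z => L (g z)) y = L (deriv (deriv g) y) := by
      rw [(heq y hy).deriv_eq]
      exact (hD2 y hy).deriv
    rw [h2]
    have hsm : ∀ (r : ℝ) (z : ℂ), r * L z = L ((r : ℂ) * z) := by
      intro r z
      rw [← Complex.real_smul, map_smul, smul_eq_mul]
    rw [hsm, hsm]
    congr 1
    rw [← hode y hy]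
    push_cast
    ring

/-- the only solution of the homogeneous mode equation
`y²g'' = (12 + 4π²n²y²)g` on `(0,∞)` which is `O(y³)` at infinity and `O(y⁻²)` at
the origin is identically zero. -/
theorem homogeneous_solution_zero (n : ℤ) (g : ℝ → ℂ)
    (hd1 : ∀ y : ℝ, 0 < y → DifferentiableAt ℝ g y)
    (hd2 : ∀ y : ℝ, 0 < y → DifferentiableAt ℝ (deriv g) y)
    (hode : ∀ y : ℝ, 0 < y →
      (y : ℂ) ^ 2 * deriv (deriv g) y =
        (((12 : ℝ) + 4 * π ^ 2 * (n : ℝ) ^ 2 * y ^ 2 : ℝ) : ℂ) * g y)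
    (C : ℝ) (hC : 0 < C)
    (hinfty : ∀ y : ℝ, 1 ≤ y → ‖g y‖ ≤ C * y ^ 3)
    (hzero : ∀ y : ℝ, 0 < y → y ≤ 1 → ‖g y‖ ≤ C * y ^ (-2 : ℤ)) :
    ∀ y : ℝ, 0 < y → g y = 0 := by
  set K : ℝ := 4 * π ^ 2 * (n : ℝ) ^ 2 with hKdef
  have hK : 0 ≤ K := by positivity
  have hre := clm_ode K g Complex.reCLM hd1 hd2 hode
  have him := clm_ode K g Complex.imCLM hd1 hd2 hode
  have hre0 : ∀ y : ℝ, 0 < y → (g y).re = 0 := by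
    apply aux_zero K hK _ hre.1 hre.2.1 hre.2.2 C hC
    · intro y hy
      exact le_trans (Complex.abs_re_le_norm _) (hinfty y hy)
    · intro y hy hy1
      exact le_trans (Complex.abs_re_le_norm _) (hzero y hy hy1)
  have him0 : ∀ y : ℝ, 0 < y → (g y).im = 0 := by
    apply aux_zero K hK _ him.1 him.2.1 him.2.2 C hC
    · intro y hy
      exact le_trans (Complex.abs_im_le_norm _) (hinfty y hy)
    · intro y hy hy1
      exact le_trans (Complex.abs_im_le_norm _) (hzero y hy hy1)
  intro y hy
  exact Complex.ext (hre0 y hy) (him0 y hy)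
end

section
/- Let S : ℍ → ℂ be any function and suppose f₁, f₂ : ℍ → ℂ are twice continuously differentiable functions (of the real coordinates x, y) which are both invariant under the action of SL(2,ℤ) by Möbius transformations, both satisfy the inhomogeneous Laplace equation y²·(∂ₓ² + ∂_y²)f_i(x+iy) − 12·f_i(x+iy) = S(x+iy) on ℍ, and both satisfy a moderate growth condition: there exist constants C_i > 0 with |f_i(x+iy)| ≤ C_i·y³ for every point x+iy in the standard fundamental domain F = { x+iy : |x| ≤ 1/2, x²+y² ≥ 1, y > 0 }. Then f₁ = f₂. -/
open Real

/-- The flat Laplacian `∂ₓ² + ∂_y²` of a function on `ℂ ≃ ℝ²`, via iterated real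
Fréchet derivatives in the directions `1` and `I`. -/
noncomputable def laplacian (f : ℂ → ℂ) (z : ℂ) : ℂ :=
  fderiv ℝ (fun w => fderiv ℝ f w 1) z 1 +
    fderiv ℝ (fun w => fderiv ℝ f w Complex.I) z Complex.I


open Complex Set Filter Topology UpperHalfPlane Matrix

noncomputable def D2 {E : Type*} [NormedAddCommGroup E] [NormedSpace ℝ E]
    (f : ℂ → E) (v z : ℂ) : E :=
  fderiv ℝ (fun y => fderiv ℝ f y v) z v

variable {E F : Type*} [NormedAddCommGroup E] [NormedSpace ℝ E]
  [NormedAddCommGroup F] [NormedSpace ℝ F]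

lemma diffAt_of_cd2 {f : ℂ → E} {U : Set ℂ} (hU : IsOpen U) (hf : ContDiffOn ℝ 2 f U)
    {z : ℂ} (hz : z ∈ U) : DifferentiableAt ℝ f z :=
  (hf.differentiableOn (by norm_num)).differentiableAt (hU.mem_nhds hz)

lemma diffAt_fderiv_of_cd2 {f : ℂ → E} {U : Set ℂ} (hU : IsOpen U) (hf : ContDiffOn ℝ 2 f U)
    {z : ℂ} (hz : z ∈ U) (v : ℂ) :
    DifferentiableAt ℝ (fun y => fderiv ℝ f y v) z := by
  have h1 : ContDiffOn ℝ 1 (fderiv ℝ f) U := hf.fderiv_of_isOpen hU (by norm_num)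
  have h2 : DifferentiableAt ℝ (fderiv ℝ f) z :=
    (h1.differentiableOn (by norm_num)).differentiableAt (hU.mem_nhds hz)
  exact h2.clm_apply (differentiableAt_const v)

lemma D2_sub {f g : ℂ → E} {U : Set ℂ} (hU : IsOpen U) (hf : ContDiffOn ℝ 2 f U)
    (hg : ContDiffOn ℝ 2 g U) {z : ℂ} (hz : z ∈ U) (v : ℂ) :
    D2 (fun y => f y - g y) v z = D2 f v z - D2 g v z := by
  have hev : (fun y => fderiv ℝ (fun x => f x - g x) y v)
      =ᶠ[𝓝 z] (fun y => fderiv ℝ f y v - fderiv ℝ g y v) := by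
    filter_upwards [hU.mem_nhds hz] with y hy
    rw [fderiv_fun_sub (diffAt_of_cd2 hU hf hy) (diffAt_of_cd2 hU hg hy)]
    rfl
  have h2 : DifferentiableAt ℝ (fun y => fderiv ℝ f y v) z := diffAt_fderiv_of_cd2 hU hf hz v
  have h3 : DifferentiableAt ℝ (fun y => fderiv ℝ g y v) z := diffAt_fderiv_of_cd2 hU hg hz v
  unfold D2
  rw [hev.fderiv_eq, fderiv_fun_sub h2 h3]
  rfl

lemma D2_clm_comp (φ : E →L[ℝ] F) {f : ℂ → E} {U : Set ℂ} (hU : IsOpen U)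
    (hf : ContDiffOn ℝ 2 f U) {z : ℂ} (hz : z ∈ U) (v : ℂ) :
    D2 (fun y => φ (f y)) v z = φ (D2 f v z) := by
  have hev : (fun y => fderiv ℝ (fun x => φ (f x)) y v)
      =ᶠ[𝓝 z] (fun y => φ (fderiv ℝ f y v)) := by
    filter_upwards [hU.mem_nhds hz] with y hy
    have : fderiv ℝ (φ ∘ f) y = (fderiv ℝ φ (f y)).comp (fderiv ℝ f y) :=
      fderiv_comp y (φ.differentiableAt) (diffAt_of_cd2 hU hf hy)
    rw [show (fun x => φ (f x)) = φ ∘ f from rfl, this, φ.fderiv]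
    rfl
  have h2 : DifferentiableAt ℝ (fun y => fderiv ℝ f y v) z := diffAt_fderiv_of_cd2 hU hf hz v
  unfold D2
  rw [hev.fderiv_eq,
    show (fun y => φ (fderiv ℝ f y v)) = φ ∘ (fun y => fderiv ℝ f y v) from rfl,
    fderiv_comp z (φ.differentiableAt) h2, φ.fderiv]
  rfl

-- 1D second derivative test at a local max
lemma sdt_1d {g g' : ℝ → ℝ} {δ L : ℝ} (hδ : 0 < δ)
    (hg : ∀ t ∈ Ioo (-δ) δ, HasDerivAt g (g' t) t)
    (h2 : HasDerivAt g' L 0) (hmax : IsLocalMax g 0) : L ≤ 0 := by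
  by_contra hL
  push_neg at hL
  have hg'0 : g' 0 = 0 := hmax.hasDerivAt_eq_zero (hg 0 ⟨by linarith, hδ⟩)
  have hslope : Tendsto (slope g' 0) (𝓝[≠] 0) (𝓝 L) :=
    hasDerivAt_iff_tendsto_slope.mp h2
  have hev : ∀ᶠ t in 𝓝[≠] (0:ℝ), L / 2 < slope g' 0 t :=
    hslope.eventually (eventually_gt_nhds (by linarith))
  have hev' : ∀ᶠ t in 𝓝[>] (0:ℝ), L / 2 < slope g' 0 t :=
    hev.filter_mono (nhdsWithin_mono 0 (fun t ht => ne_of_gt ht))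
  rw [eventually_nhdsWithin_iff, Metric.eventually_nhds_iff] at hev'
  obtain ⟨ε, hε, hball⟩ := hev'
  -- on (0, δ'), g' > 0
  set δ' := min (δ/2) (ε/2) with hδ'def
  have hδ' : 0 < δ' := by positivity
  have hδ'δ : δ' ≤ δ/2 := min_le_left _ _
  have hδ'ε : δ' ≤ ε/2 := min_le_right _ _
  have hpos : ∀ t ∈ Ioo (0:ℝ) δ', 0 < g' t := by
    intro t ht
    have htε : dist t 0 < ε := by
      rw [Real.dist_eq, sub_zero, abs_of_pos ht.1]; linarith [ht.2]
    have h1 : L / 2 < slope g' 0 t := hball htε ht.1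
    rw [slope_def_field, hg'0, sub_zero, sub_zero] at h1
    have htp := ht.1
    have : L / 2 * t < g' t := (lt_div_iff₀ htp).mp h1
    nlinarith
  -- g is strictly monotone on [0, δ']
  have hmono : StrictMonoOn g (Icc 0 δ') := by
    apply strictMonoOn_of_deriv_pos (convex_Icc 0 δ')
    · intro t ht
      exact ((hg t ⟨by linarith [ht.1], by linarith [ht.2]⟩).differentiableAt).continuousAt.continuousWithinAt
    · intro t ht
      rw [interior_Icc] at ht
      rw [(hg t ⟨by linarith [ht.1], by linarith [ht.2]⟩).deriv]
      exact hpos t ht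
  -- contradiction with local max
  have hmax' : ∀ᶠ x in 𝓝 (0:ℝ), g x ≤ g 0 := hmax
  rw [Metric.eventually_nhds_iff] at hmax'
  obtain ⟨ρ, hρ, hρball⟩ := hmax'
  set t₀ := min (δ'/2) (ρ/2) with ht₀def
  have ht₀ : 0 < t₀ := by positivity
  have h1 : g 0 < g t₀ := hmono ⟨le_rfl, by linarith⟩
    ⟨le_of_lt ht₀, le_trans (min_le_left _ _) (by linarith)⟩ ht₀
  have h2' : g t₀ ≤ g 0 := hρball (by
    rw [Real.dist_eq, sub_zero, abs_of_pos ht₀]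
    exact lt_of_le_of_lt (min_le_right _ _) (by linarith))
  linarith

-- second derivative test in direction v at an interior local max
lemma sdt_2d {w : ℂ → ℝ} {U : Set ℂ} (hU : IsOpen U) (hw : ContDiffOn ℝ 2 w U)
    {z₁ : ℂ} (hz₁ : z₁ ∈ U) (hmax : IsLocalMax w z₁) (v : ℂ) :
    D2 w v z₁ ≤ 0 := by
  set L : ℝ → ℂ := fun t => z₁ + t • v with hL
  have hL0 : L 0 = z₁ := by simp [hL]
  have hLd : ∀ t : ℝ, HasDerivAt L v t := by
    intro t
    exact (((hasDerivAt_id t).smul_const v).const_add z₁).congr_deriv (one_smul ℝ v)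
  have hLcont : Continuous L := by fun_prop
  -- preimage of U is open, contains an interval
  have hopen : IsOpen (L ⁻¹' U) := hU.preimage hLcont
  have h0mem : (0:ℝ) ∈ L ⁻¹' U := by simp [hL0, hz₁]
  obtain ⟨δ, hδ, hball⟩ := Metric.isOpen_iff.mp hopen 0 h0mem
  have hsub : ∀ t ∈ Ioo (-δ) δ, L t ∈ U := by
    intro t ht
    apply hball
    rw [Metric.mem_ball, Real.dist_eq, sub_zero, abs_lt]
    exact ⟨ht.1, ht.2⟩
  -- g and g'
  set g : ℝ → ℝ := fun t => w (L t) with hg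
  set g' : ℝ → ℝ := fun t => fderiv ℝ w (L t) v with hg'
  have hgd : ∀ t ∈ Ioo (-δ) δ, HasDerivAt g (g' t) t := by
    intro t ht
    have hdw : DifferentiableAt ℝ w (L t) := diffAt_of_cd2 hU hw (hsub t ht)
    exact hdw.hasFDerivAt.comp_hasDerivAt t (hLd t)
  have hG : DifferentiableAt ℝ (fun y => fderiv ℝ w y v) z₁ := diffAt_fderiv_of_cd2 hU hw hz₁ v
  have hg'd : HasDerivAt g' (D2 w v z₁) 0 := by
    have h1 : HasFDerivAt (fun y => fderiv ℝ w y v)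
        (fderiv ℝ (fun y => fderiv ℝ w y v) z₁) (L 0) := by
      rw [hL0]; exact hG.hasFDerivAt
    exact h1.comp_hasDerivAt 0 (hLd 0)
  have hgmax : IsLocalMax g 0 := by
    have htend : Tendsto L (𝓝 0) (𝓝 z₁) := by
      rw [← hL0]; exact hLcont.continuousAt
    exact (htend.eventually hmax).mono (fun t ht => by simpa [hg, hL0] using ht)
  exact sdt_1d hδ hgd hg'd hgmax

noncomputable def lapR (u : ℂ → ℝ) (z : ℂ) : ℝ := D2 u 1 z + D2 u Complex.I z

section comparison
variable (a K : ℝ)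

noncomputable def psi0 : ℝ → ℝ := fun y => a * y ^ (4:ℤ) + K * y ^ (-3:ℤ)
noncomputable def psi1 : ℝ → ℝ := fun y => a * (4 * y ^ (3:ℤ)) + K * (-3 * y ^ (-4:ℤ))
noncomputable def psi2 : ℝ → ℝ := fun y => a * (12 * y ^ (2:ℤ)) + K * (12 * y ^ (-5:ℤ))

lemma psi0_deriv {y : ℝ} (hy : y ≠ 0) : HasDerivAt (psi0 a K) (psi1 a K y) y := by
  exact ((hasDerivAt_zpow 4 y (Or.inl hy)).const_mul a).add
    (((hasDerivAt_zpow (-3) y (Or.inl hy)).const_mul K).congr_deriv (by norm_num [psi1]))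

lemma psi1_deriv {y : ℝ} (hy : y ≠ 0) : HasDerivAt (psi1 a K) (psi2 a K y) y := by
  have h1 := ((hasDerivAt_zpow 3 y (Or.inl hy)).const_mul (4:ℝ)).const_mul a
  have h2 := ((hasDerivAt_zpow (-4) y (Or.inl hy)).const_mul (-3:ℝ)).const_mul K
  have h : HasDerivAt (psi1 a K) _ y := h1.add h2
  convert h using 1
  show psi2 a K y = a * (4 * ((3:ℤ) * y ^ ((3:ℤ) - 1))) + K * (-3 * ((-4:ℤ) * y ^ ((-4:ℤ) - 1)))
  have e1 : ((3:ℤ):ℝ) = 3 := by norm_num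
  simp only [psi2]
  norm_num
  ring
lemma psi2_eq {y : ℝ} (hy : y ≠ 0) : psi2 a K y = 12 * psi0 a K y / y ^ 2 := by
  rw [eq_div_iff (pow_ne_zero 2 hy)]
  simp only [psi0, psi2]
  have h5 : y ^ (-5:ℤ) = (y^5)⁻¹ := by
    rw [← zpow_natCast y 5, ← _root_.zpow_neg]; norm_num
  have h3 : y ^ (-3:ℤ) = (y^3)⁻¹ := by
    rw [← zpow_natCast y 3, ← _root_.zpow_neg]; norm_num
  have h2 : y ^ (2:ℤ) = y^2 := zpow_ofNat y 2
  have h4 : y ^ (4:ℤ) = y^4 := zpow_ofNat y 4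
  rw [h5, h3, h2, h4]
  field_simp

noncomputable def hcomp : ℂ → ℝ := fun z => psi0 a K z.im

lemma hcomp_contDiffOn : ContDiffOn ℝ 2 (hcomp a K) {z : ℂ | 0 < z.im} := by
  have him : ContDiff ℝ 2 (fun z : ℂ => z.im) := Complex.imCLM.contDiff
  have h1 : ContDiffOn ℝ 2 (fun z : ℂ => a * z.im ^ 4 + K * (z.im ^ 3)⁻¹)
      {z : ℂ | 0 < z.im} := by
    apply ContDiffOn.add
    · exact (contDiff_const.mul (him.pow 4)).contDiffOn
    · exact contDiffOn_const.mul ((him.pow 3).contDiffOn.inv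
        (fun z hz => pow_ne_zero _ (ne_of_gt hz)))
  apply h1.congr
  intro z hz
  simp only [hcomp, psi0]
  have h3 : z.im ^ (-3:ℤ) = (z.im^3)⁻¹ := by
    rw [← zpow_natCast z.im 3, ← _root_.zpow_neg]; norm_num
  have h4 : z.im ^ (4:ℤ) = z.im^4 := zpow_ofNat z.im 4
  rw [h3, h4]

lemma hcomp_D2 (v : ℂ) {z : ℂ} (hz : 0 < z.im) :
    D2 (hcomp a K) v z = psi2 a K z.im * v.im ^ 2 := by
  have hU : IsOpen {z : ℂ | 0 < z.im} := by
    exact isOpen_lt continuous_const Complex.continuous_im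
  -- first derivative
  have hfd : ∀ y : ℂ, 0 < y.im →
      HasFDerivAt (hcomp a K) (psi1 a K y.im • Complex.imCLM) y := by
    intro y hy
    exact (psi0_deriv a K (ne_of_gt hy)).comp_hasFDerivAt y Complex.imCLM.hasFDerivAt
  have hev : (fun y => fderiv ℝ (hcomp a K) y v)
      =ᶠ[𝓝 z] (fun y => psi1 a K y.im * v.im) := by
    filter_upwards [hU.mem_nhds hz] with y hy
    rw [(hfd y hy).fderiv]
    simp
  have hout : HasFDerivAt (fun y : ℂ => psi1 a K y.im * v.im)
      (v.im • (psi2 a K z.im • Complex.imCLM)) z := by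
    have h1 : HasFDerivAt (fun y : ℂ => psi1 a K y.im)
        (psi2 a K z.im • Complex.imCLM) z :=
      (psi1_deriv a K (ne_of_gt hz)).comp_hasFDerivAt z Complex.imCLM.hasFDerivAt
    have h2 := h1.mul_const v.im
    exact h2
  rw [D2, hev.fderiv_eq, hout.fderiv]
  simp
  ring


end comparison

lemma isOpenU : IsOpen {z : ℂ | 0 < z.im} := isOpen_lt continuous_const Complex.continuous_im

/-- Maximum principle on the strip/cylinder. -/
lemma strip_bound (u : ℂ → ℝ) (hu : ContDiffOn ℝ 2 u {z : ℂ | 0 < z.im})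
    (hequ : ∀ z : ℂ, 0 < z.im → lapR u z = 12 * u z / z.im ^ 2)
    (hper : ∀ z : ℂ, 0 < z.im → u (z + 1) = u z)
    (y₀ T ε K : ℝ) (hy₀ : 0 < y₀) (hy₀T : y₀ ≤ T)
    (hbot : ∀ z : ℂ, z.im = y₀ → u z ≤ ε * y₀ ^ (4:ℤ) + K * y₀ ^ (-3:ℤ))
    (htop : ∀ z : ℂ, z.im = T → u z ≤ ε * T ^ (4:ℤ) + K * T ^ (-3:ℤ)) :
    ∀ z : ℂ, y₀ ≤ z.im → z.im ≤ T → u z ≤ ε * z.im ^ (4:ℤ) + K * z.im ^ (-3:ℤ) := by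
  set U : Set ℂ := {z : ℂ | 0 < z.im} with hUdef
  have hU : IsOpen U := isOpenU
  set hc : ℂ → ℝ := hcomp ε K with hhdef
  set w : ℂ → ℝ := fun z => u z - hc z with hwdef
  have hh : ContDiffOn ℝ 2 hc U := hcomp_contDiffOn ε K
  have hw : ContDiffOn ℝ 2 w U := hu.sub hh
  -- the equation for w
  have heqw : ∀ z : ℂ, 0 < z.im → lapR w z = 12 * w z / z.im ^ 2 := by
    intro z hz
    have h1 : lapR w z = lapR u z - (D2 hc 1 z + D2 hc Complex.I z) := by
      rw [lapR, D2_sub hU hu hh hz 1, D2_sub hU hu hh hz Complex.I]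
      rw [lapR]; ring
    have h2 : D2 hc 1 z + D2 hc Complex.I z = 12 * hc z / z.im ^ 2 := by
      rw [hcomp_D2 ε K 1 hz, hcomp_D2 ε K Complex.I hz]
      simp [psi2_eq ε K (ne_of_gt hz)]
      rfl
    rw [h1, h2, hequ z hz]
    have : z.im ^ 2 ≠ 0 := pow_ne_zero 2 (ne_of_gt hz)
    field_simp
    ring
  -- periodicity of w by integer translations
  have hwper : ∀ n : ℤ, ∀ z : ℂ, 0 < z.im → w (z + n) = w z := by
    have hbase : ∀ z : ℂ, 0 < z.im → w (z + 1) = w z := by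
      intro z hz
      have him : (z + 1).im = z.im := by simp
      simp only [hwdef, hhdef, hcomp, him, hper z hz]
    intro n
    induction n using Int.induction_on with
    | zero => intro z hz; simp
    | succ k ih =>
      intro z hz
      have ih' := ih z hz
      push_cast at ih' ⊢
      have h2 : 0 < (z + (k:ℂ)).im := by simpa using hz
      rw [show z + ((k:ℂ) + 1) = (z + (k:ℂ)) + 1 by ring, hbase _ h2, ih']
    | pred k ih =>
      intro z hz
      have ih' := ih z hz
      push_cast at ih' ⊢
      have h2 : 0 < (z + (-(k:ℂ) - 1)).im := by simpa using hz
      have hb := hbase _ h2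
      rw [show z + (-(k:ℂ) - 1) + 1 = z + -(k:ℂ) by ring] at hb
      exact hb.symm.trans ih'
  -- the compact fundamental cell
  set Kc : Set ℂ := {z : ℂ | z.re ∈ Icc (0:ℝ) 1 ∧ z.im ∈ Icc y₀ T} with hKcdef
  have hKcU : Kc ⊆ U := fun z hz => lt_of_lt_of_le hy₀ hz.2.1
  have hKclosed : IsClosed Kc := by
    apply IsClosed.inter
    · exact isClosed_Icc.preimage Complex.continuous_re
    · exact isClosed_Icc.preimage Complex.continuous_im
  have hKbdd : Bornology.IsBounded Kc := by
    apply (Bornology.IsBounded.subset (Metric.isBounded_closedBall (x := (0:ℂ)) (r := 1 + |y₀| + |T|)))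
    intro z hz
    rw [Metric.mem_closedBall, dist_zero_right]
    refine le_trans (Complex.norm_le_abs_re_add_abs_im z) ?_
    have h1 : |z.re| ≤ 1 := abs_le.mpr ⟨by linarith [hz.1.1], hz.1.2⟩
    have h2 : |z.im| ≤ |T| := by
      rw [abs_of_pos (lt_of_lt_of_le hy₀ hz.2.1)]
      exact le_trans hz.2.2 (le_abs_self T)
    have h0 : 0 ≤ |y₀| := abs_nonneg y₀
    linarith
  have hKcompact : IsCompact Kc := Metric.isCompact_of_isClosed_isBounded hKclosed hKbdd
  have hKne : Kc.Nonempty := ⟨Complex.I * y₀, by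
    constructor
    · simp
    · simp [le_refl, hy₀T]⟩
  have hwcont : ContinuousOn w Kc := (hw.continuousOn).mono hKcU
  obtain ⟨z₁, hz₁K, hz₁max⟩ := hKcompact.exists_isMaxOn hKne hwcont
  -- translation into the cell
  have hmaxall : ∀ z : ℂ, y₀ ≤ z.im → z.im ≤ T → w z ≤ w z₁ := by
    intro z hzy hzT
    have hz : 0 < z.im := lt_of_lt_of_le hy₀ hzy
    set n : ℤ := ⌊z.re⌋ with hndef
    have him : (z - n).im = z.im := by simp
    have hzU : 0 < (z - (n:ℂ)).im := by rwa [him]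
    have hwz : w (z - n) = w z := by
      have := hwper (-n) z hz
      rw [show z + ((-n : ℤ) : ℂ) = z - n by push_cast; ring] at this
      exact this
    have hmem : (z - (n:ℂ)) ∈ Kc := by
      constructor
      · have hre : (z - (n:ℂ)).re = z.re - n := by simp
        rw [hre]
        constructor
        · linarith [Int.floor_le z.re]
        · linarith [Int.lt_floor_add_one z.re]
      · rw [him]; exact ⟨hzy, hzT⟩
    rw [← hwz]
    exact hz₁max hmem
  -- suppose the bound fails somewhere
  intro z hzy hzT
  by_contra hcon
  push_neg at hcon
  have hwz : 0 < w z := by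
    simp only [hwdef, hhdef, hcomp, psi0, sub_pos]
    exact hcon
  have hm : 0 < w z₁ := lt_of_lt_of_le hwz (hmaxall z hzy hzT)
  have hz₁U : z₁ ∈ U := hKcU hz₁K
  have hz₁im : 0 < z₁.im := hz₁U
  -- z₁ is in the interior (in the im direction)
  have hy₀lt : y₀ < z₁.im := by
    rcases lt_or_eq_of_le hz₁K.2.1 with hlt | heq2
    · exact hlt
    · exfalso
      have hb := hbot z₁ heq2.symm
      have hcval : hc z₁ = ε * y₀ ^ (4:ℤ) + K * y₀ ^ (-3:ℤ) := by
        simp only [hhdef, hcomp, psi0]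
        rw [show z₁.im = y₀ from heq2.symm]
      have hwle : w z₁ ≤ 0 := by
        simp only [hwdef, sub_nonpos, hcval]
        exact hb
      linarith
  have hTgt : z₁.im < T := by
    rcases lt_or_eq_of_le hz₁K.2.2 with hlt | heq2
    · exact hlt
    · exfalso
      have hb := htop z₁ heq2
      have hcval : hc z₁ = ε * T ^ (4:ℤ) + K * T ^ (-3:ℤ) := by
        simp only [hhdef, hcomp, psi0]
        rw [show z₁.im = T from heq2]
      have hwle : w z₁ ≤ 0 := by
        simp only [hwdef, sub_nonpos, hcval]
        exact hb
      linarith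
  -- local max
  have hlocmax : IsLocalMax w z₁ := by
    have hV : IsOpen {z : ℂ | y₀ < z.im ∧ z.im < T} := by
      apply IsOpen.inter
      · exact isOpen_lt continuous_const Complex.continuous_im
      · exact isOpen_lt Complex.continuous_im continuous_const
    filter_upwards [hV.mem_nhds ⟨hy₀lt, hTgt⟩] with y hy
    exact hmaxall y (le_of_lt hy.1) (le_of_lt hy.2)
  have hd1 : D2 w 1 z₁ ≤ 0 := sdt_2d hU hw hz₁U hlocmax 1
  have hdI : D2 w Complex.I z₁ ≤ 0 := sdt_2d hU hw hz₁U hlocmax Complex.I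
  have hlap : lapR w z₁ ≤ 0 := by rw [lapR]; linarith
  have hlap2 : lapR w z₁ = 12 * w z₁ / z₁.im ^ 2 := heqw z₁ hz₁im
  have hpos : 0 < 12 * w z₁ / z₁.im ^ 2 := by positivity
  linarith

lemma exists_fundamental (z : ℂ) (hz : 0 < z.im) :
    ∃ zs : ℂ, 0 < zs.im ∧ |zs.re| ≤ 1/2 ∧ 1 ≤ zs.re^2 + zs.im^2 ∧
      zs.im ≤ max z.im z.im⁻¹ ∧
      ∀ f : ℂ → ℂ,
        (∀ γ : Matrix.SpecialLinearGroup (Fin 2) ℤ, ∀ w : ℂ, 0 < w.im →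
          f ((((γ : Matrix (Fin 2) (Fin 2) ℤ) 0 0 : ℂ) * w + ((γ : Matrix (Fin 2) (Fin 2) ℤ) 0 1 : ℂ)) /
              (((γ : Matrix (Fin 2) (Fin 2) ℤ) 1 0 : ℂ) * w + ((γ : Matrix (Fin 2) (Fin 2) ℤ) 1 1 : ℂ))) = f w) →
        f zs = f z := by
  set zh : ℍ := ⟨z, hz⟩ with hzh
  obtain ⟨γ, hγ⟩ := ModularGroup.exists_smul_mem_fd zh
  set zs : ℂ := ((γ • zh : ℍ) : ℂ) with hzs
  have him : zs.im = (γ • zh : ℍ).im := rfl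
  have hre : zs.re = (γ • zh : ℍ).re := rfl
  have heq : zs = ((((γ : Matrix (Fin 2) (Fin 2) ℤ) 0 0 : ℂ) * z + ((γ : Matrix (Fin 2) (Fin 2) ℤ) 0 1 : ℂ)) /
      (((γ : Matrix (Fin 2) (Fin 2) ℤ) 1 0 : ℂ) * z + ((γ : Matrix (Fin 2) (Fin 2) ℤ) 1 1 : ℂ))) := by
    rw [hzs, UpperHalfPlane.specialLinearGroup_apply]
    simp only [UpperHalfPlane.coe_mk]
    push_cast
    rfl
  refine ⟨zs, (γ • zh).im_pos, ?_, ?_, ?_, ?_⟩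
  · exact hγ.2
  · have h1 : 1 ≤ Complex.normSq zs := hγ.1
    rwa [Complex.normSq_apply, ← sq, ← sq] at h1
  · -- im bound
    have h1 : (γ • zh).im = zh.im / Complex.normSq (denom γ zh) :=
      ModularGroup.im_smul_eq_div_normSq γ zh
    have hd : denom γ zh = ((γ : Matrix (Fin 2) (Fin 2) ℤ) 1 0 : ℂ) * z + ((γ : Matrix (Fin 2) (Fin 2) ℤ) 1 1 : ℂ) := by
      rw [ModularGroup.denom_apply]
    set c : ℤ := (γ : Matrix (Fin 2) (Fin 2) ℤ) 1 0 with hc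
    set d : ℤ := (γ : Matrix (Fin 2) (Fin 2) ℤ) 1 1 with hdd
    have hzhim : zh.im = z.im := rfl
    rw [him, h1, hzhim, hd]
    rcases eq_or_ne c 0 with hc0 | hc0
    · -- c = 0 : then d = ±1
      have hdet : (γ : Matrix (Fin 2) (Fin 2) ℤ).det = 1 := γ.property
      rw [Matrix.det_fin_two] at hdet
      have hc0' : (γ : Matrix (Fin 2) (Fin 2) ℤ) 1 0 = 0 := by rw [← hc]; exact hc0
      have hd1 : (γ : Matrix (Fin 2) (Fin 2) ℤ) 0 0 * d = 1 := by
        rw [hdd]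
        rw [hc0', mul_zero, sub_zero] at hdet
        exact hdet
      have hdpm : d = 1 ∨ d = -1 := by
        have hu : IsUnit ((γ : Matrix (Fin 2) (Fin 2) ℤ) 0 0 * d) := by
          rw [hd1]; exact isUnit_one
        exact Int.isUnit_iff.mp (isUnit_of_mul_isUnit_right hu)
      have hns : Complex.normSq ((c:ℂ) * z + (d:ℂ)) = 1 := by
        rcases hdpm with hd' | hd' <;> rw [hc0, hd'] <;> norm_num
      rw [hns]
      simp only [div_one]
      exact le_max_left _ _
    · -- c ≠ 0
      have hns : z.im ^ 2 ≤ Complex.normSq ((c:ℂ) * z + (d:ℂ)) := by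
        have hc1 : (1:ℝ) ≤ (c:ℝ)^2 := by
          have : (1:ℤ) ≤ c^2 := by
            rcases lt_or_gt_of_ne hc0 with h | h <;> nlinarith
          exact_mod_cast this
        have : Complex.normSq ((c:ℂ) * z + (d:ℂ)) = ((c:ℝ) * z.re + d)^2 + ((c:ℝ) * z.im)^2 := by
          rw [Complex.normSq_apply]
          simp
          ring
        rw [this]
        nlinarith [sq_nonneg ((c:ℝ) * z.re + d), sq_nonneg z.im]
      have h2 : z.im / Complex.normSq ((c:ℂ) * z + (d:ℂ)) ≤ z.im⁻¹ := by
        rw [div_le_iff₀ (by nlinarith [Complex.normSq_pos.mpr (show ((c:ℂ)*z+(d:ℂ)) ≠ 0 from by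
          intro hh
          have := congrArg Complex.im hh
          simp at this
          rcases this with h' | h'
          · exact hc0 (by exact_mod_cast h')
          · linarith)] : (0:ℝ) < Complex.normSq ((c:ℂ)*z+(d:ℂ)))]
        rw [inv_mul_eq_div, le_div_iff₀ hz]
        nlinarith
      exact le_trans h2 (le_max_right _ _)
  · intro f hf
    rw [heq]
    exact hf γ z hz


lemma le_of_forall_eps {a b : ℝ} (h : ∀ ε : ℝ, 0 < ε → a ≤ b + ε) : a ≤ b := by
  by_contra hc
  push_neg at hc
  have := h ((a - b) / 2) (by linarith)
  linarith

lemma le_of_forall_small {a b d s : ℝ} (hs : 0 < s) (hd : 0 ≤ d)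
    (h : ∀ y₀ : ℝ, 0 < y₀ → y₀ ≤ s → a ≤ b + d * y₀) : a ≤ b := by
  apply le_of_forall_eps
  intro ε hε
  rcases eq_or_lt_of_le hd with h0 | h0
  · have := h s hs le_rfl; rw [← h0] at this; linarith
  · have hy := h (min s (ε / d)) (by positivity) (min_le_left _ _)
    have hle : d * min s (ε / d) ≤ ε := by
      calc d * min s (ε / d) ≤ d * (ε / d) :=
            mul_le_mul_of_nonneg_left (min_le_right _ _) hd
        _ = ε := by field_simp
    linarith

lemma zpow4 (y : ℝ) : y ^ (4:ℤ) = y ^ 4 := zpow_ofNat y 4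
lemma zpowm3 (y : ℝ) : y ^ (-3:ℤ) = (y ^ 3)⁻¹ := by
  rw [← zpow_natCast y 3, ← _root_.zpow_neg]; norm_num

set_option maxHeartbeats 1000000 in
/-- Master bound: sub-eigenfunctions with growth control are bounded by `B y⁻³`. -/
lemma master (g : ℂ → ℂ) (hreg : ContDiffOn ℝ 2 g {z : ℂ | 0 < z.im})
    (hlapg : ∀ z : ℂ, 0 < z.im →
      D2 g 1 z + D2 g Complex.I z = (((12 / z.im ^ 2 : ℝ) : ℂ)) * g z)
    (hper : ∀ z : ℂ, 0 < z.im → g (z + 1) = g z)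
    (c : ℂ) (A B Cc : ℝ) (hA : 0 ≤ A) (hB : 0 ≤ B) (hCc : 0 ≤ Cc)
    (hbnd : ∀ z : ℂ, 0 < z.im → (c * g z).re ≤ A * z.im ^ 3 + B * (z.im ^ 3)⁻¹ + Cc) :
    ∀ z : ℂ, 0 < z.im → (c * g z).re ≤ B * (z.im ^ 3)⁻¹ := by
  have hU : IsOpen {z : ℂ | 0 < z.im} := isOpenU
  set φ : ℂ →L[ℝ] ℝ :=
    Complex.reCLM.comp ((ContinuousLinearMap.mul ℂ ℂ c).restrictScalars ℝ) with hφdef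
  have hφ : ∀ w : ℂ, φ w = (c * w).re := fun w => rfl
  set u : ℂ → ℝ := fun z => (c * g z).re with hudef
  have huφ : u = fun z => φ (g z) := rfl
  have hu : ContDiffOn ℝ 2 u {z : ℂ | 0 < z.im} := by
    rw [huφ]; exact φ.contDiff.comp_contDiffOn hreg
  have hequ : ∀ z : ℂ, 0 < z.im → lapR u z = 12 * u z / z.im ^ 2 := by
    intro z hz
    have h1 : lapR u z = φ (D2 g 1 z) + φ (D2 g Complex.I z) := by
      rw [lapR, huφ, D2_clm_comp φ hU hreg hz 1, D2_clm_comp φ hU hreg hz Complex.I]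
    rw [h1, ← map_add, hlapg z hz, hφ]
    rw [show c * ((((12 / z.im ^ 2 : ℝ)) : ℂ) * g z)
        = (((12 / z.im ^ 2 : ℝ)) : ℂ) * (c * g z) by ring]
    rw [Complex.re_ofReal_mul]
    show (12 / z.im ^ 2) * u z = 12 * u z / z.im ^ 2
    ring
  have hperu : ∀ z : ℂ, 0 < z.im → u (z + 1) = u z := by
    intro z hz
    simp only [hudef, hper z hz]
  -- main estimate
  intro z hz
  have h3 : (0:ℝ) < z.im ^ 3 := by positivity
  -- step 1 : for every ε and y₀ we have the strip bound at z
  have step1 : ∀ ε : ℝ, 0 < ε → ∀ y₀ : ℝ, 0 < y₀ → y₀ ≤ min 1 z.im →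
      u z ≤ ε * z.im ^ 4 + (B + (A + Cc) * y₀ ^ 3) * (z.im ^ 3)⁻¹ := by
    intro ε hε y₀ hy₀ hy₀le
    set T : ℝ := max z.im (max 1 ((A + B + Cc) / ε)) with hTdef
    have hT1 : (1:ℝ) ≤ T := le_trans (le_max_left _ _) (le_max_right _ _)
    have hTz : z.im ≤ T := le_max_left _ _
    have hTS : A + B + Cc ≤ ε * T := by
      have h4 : (A + B + Cc) / ε ≤ T := le_trans (le_max_right _ _) (le_max_right _ _)
      rw [div_le_iff₀ hε] at h4
      linarith [h4, mul_comm ε T]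
    have hy₀1 : y₀ ≤ 1 := le_trans hy₀le (min_le_left _ _)
    have hy₀z : y₀ ≤ z.im := le_trans hy₀le (min_le_right _ _)
    set K : ℝ := B + (A + Cc) * y₀ ^ 3 with hKdef
    have hK : 0 ≤ K := by positivity
    have hbot : ∀ w : ℂ, w.im = y₀ → u w ≤ ε * y₀ ^ (4:ℤ) + K * y₀ ^ (-3:ℤ) := by
      intro w hw
      have h5 := hbnd w (by rw [hw]; exact hy₀)
      rw [hw] at h5
      rw [zpow4, zpowm3, hKdef]
      have hy3 : (0:ℝ) < y₀ ^ 3 := by positivity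
      have hinv : y₀ ^ 3 * (y₀ ^ 3)⁻¹ = 1 := mul_inv_cancel₀ (ne_of_gt hy3)
      have hy31 : y₀ ^ 3 ≤ 1 := pow_le_one₀ (le_of_lt hy₀) hy₀1
      have h6 : A * y₀ ^ 3 ≤ A := by nlinarith
      have h7 : 0 ≤ ε * y₀ ^ 4 := by positivity
      calc u w ≤ A * y₀ ^ 3 + B * (y₀ ^ 3)⁻¹ + Cc := h5
        _ ≤ ε * y₀ ^ 4 + (B + (A + Cc) * y₀ ^ 3) * (y₀ ^ 3)⁻¹ := by
            have he : (B + (A + Cc) * y₀ ^ 3) * (y₀ ^ 3)⁻¹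
                = B * (y₀ ^ 3)⁻¹ + (A + Cc) := by
              rw [add_mul, mul_assoc, hinv, mul_one]
            rw [he]
            linarith
    have htop : ∀ w : ℂ, w.im = T → u w ≤ ε * T ^ (4:ℤ) + K * T ^ (-3:ℤ) := by
      intro w hw
      have hT0 : (0:ℝ) < T := lt_of_lt_of_le one_pos hT1
      have h5 := hbnd w (by rw [hw]; linarith)
      rw [hw] at h5
      rw [zpow4, zpowm3]
      have hT3 : (1:ℝ) ≤ T ^ 3 := one_le_pow₀ hT1
      have hT3' : (0:ℝ) < T ^ 3 := by positivity
      have hTinv : (T ^ 3)⁻¹ ≤ 1 := by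
        rw [inv_le_one_iff₀]; right; exact hT3
      have h6 : A * T ^ 3 + B * (T ^ 3)⁻¹ + Cc ≤ (A + B + Cc) * T ^ 3 := by
        have e1 : B * (T ^ 3)⁻¹ ≤ B * T ^ 3 := by
          apply mul_le_mul_of_nonneg_left (le_trans hTinv hT3) hB
        nlinarith
      have h7 : (A + B + Cc) * T ^ 3 ≤ ε * T ^ 4 := by
        have : (A + B + Cc) * T ^ 3 ≤ (ε * T) * T ^ 3 :=
          mul_le_mul_of_nonneg_right hTS (le_of_lt hT3')
        calc (A + B + Cc) * T ^ 3 ≤ (ε * T) * T ^ 3 := this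
          _ = ε * T ^ 4 := by ring
      have h8 : 0 ≤ K * (T ^ 3)⁻¹ := by positivity
      linarith
    have := strip_bound u hu hequ hperu y₀ T ε K hy₀ (le_trans hy₀z hTz) hbot htop z hy₀z hTz
    rw [zpow4, zpowm3] at this
    exact this
  -- step 2 : let ε → 0
  have step2 : ∀ y₀ : ℝ, 0 < y₀ → y₀ ≤ min 1 z.im →
      u z ≤ (B + (A + Cc) * y₀ ^ 3) * (z.im ^ 3)⁻¹ := by
    intro y₀ hy₀ hy₀le
    apply le_of_forall_eps
    intro ε hε
    have h4 : (0:ℝ) < z.im ^ 4 := by positivity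
    have := step1 (ε / z.im ^ 4) (by positivity) y₀ hy₀ hy₀le
    rw [div_mul_cancel₀ _ (ne_of_gt h4)] at this
    linarith
  -- step 3 : let y₀ → 0
  have hd : 0 ≤ (A + Cc) * (z.im ^ 3)⁻¹ := by positivity
  apply le_of_forall_small (lt_min one_pos hz) hd
  intro y₀ hy₀ hy₀le
  have := step2 y₀ hy₀ hy₀le
  have hy₀1 : y₀ ≤ 1 := le_trans hy₀le (min_le_left _ _)
  have h5 : y₀ ^ 3 ≤ y₀ := by
    have := pow_le_pow_of_le_one (le_of_lt hy₀) hy₀1 (show 1 ≤ 3 by norm_num)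
    simpa using this
  have h6 : (B + (A + Cc) * y₀ ^ 3) * (z.im ^ 3)⁻¹
      ≤ B * (z.im ^ 3)⁻¹ + (A + Cc) * (z.im ^ 3)⁻¹ * y₀ := by
    have hi : (0:ℝ) ≤ (z.im ^ 3)⁻¹ := by positivity
    have : (A + Cc) * y₀ ^ 3 ≤ (A + Cc) * y₀ := by nlinarith
    nlinarith
  linarith


/-- uniqueness of `SL(2,ℤ)`-invariant solutions of moderate growth to
the inhomogeneous Laplace equation `y²(∂ₓ²+∂_y²)f − 12f = S` on the upper half plane. -/
theorem inhomogeneous_laplace_uniqueness (S f₁ f₂ : ℂ → ℂ)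
    (hreg₁ : ContDiffOn ℝ 2 f₁ {z : ℂ | 0 < z.im})
    (hreg₂ : ContDiffOn ℝ 2 f₂ {z : ℂ | 0 < z.im})
    (hinv₁ : ∀ γ : Matrix.SpecialLinearGroup (Fin 2) ℤ, ∀ z : ℂ, 0 < z.im →
      f₁ ((((γ : Matrix (Fin 2) (Fin 2) ℤ) 0 0 : ℂ) * z + ((γ : Matrix (Fin 2) (Fin 2) ℤ) 0 1 : ℂ)) /
          (((γ : Matrix (Fin 2) (Fin 2) ℤ) 1 0 : ℂ) * z + ((γ : Matrix (Fin 2) (Fin 2) ℤ) 1 1 : ℂ))) = f₁ z)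
    (hinv₂ : ∀ γ : Matrix.SpecialLinearGroup (Fin 2) ℤ, ∀ z : ℂ, 0 < z.im →
      f₂ ((((γ : Matrix (Fin 2) (Fin 2) ℤ) 0 0 : ℂ) * z + ((γ : Matrix (Fin 2) (Fin 2) ℤ) 0 1 : ℂ)) /
          (((γ : Matrix (Fin 2) (Fin 2) ℤ) 1 0 : ℂ) * z + ((γ : Matrix (Fin 2) (Fin 2) ℤ) 1 1 : ℂ))) = f₂ z)
    (heq₁ : ∀ z : ℂ, 0 < z.im →
      (z.im : ℂ) ^ 2 * laplacian f₁ z - 12 * f₁ z = S z)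
    (heq₂ : ∀ z : ℂ, 0 < z.im →
      (z.im : ℂ) ^ 2 * laplacian f₂ z - 12 * f₂ z = S z)
    (C₁ C₂ : ℝ) (hC₁ : 0 < C₁) (hC₂ : 0 < C₂)
    (hgrowth₁ : ∀ z : ℂ, 0 < z.im → |z.re| ≤ 1 / 2 → 1 ≤ z.re ^ 2 + z.im ^ 2 →
      ‖f₁ z‖ ≤ C₁ * z.im ^ 3)
    (hgrowth₂ : ∀ z : ℂ, 0 < z.im → |z.re| ≤ 1 / 2 → 1 ≤ z.re ^ 2 + z.im ^ 2 →
      ‖f₂ z‖ ≤ C₂ * z.im ^ 3) :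
    ∀ z : ℂ, 0 < z.im → f₁ z = f₂ z := by
  have hU : IsOpen {z : ℂ | 0 < z.im} := isOpenU
  set g : ℂ → ℂ := fun z => f₁ z - f₂ z with hgdef
  have hreg : ContDiffOn ℝ 2 g {z : ℂ | 0 < z.im} := hreg₁.sub hreg₂
  -- the equation for g
  have hlapg : ∀ z : ℂ, 0 < z.im →
      D2 g 1 z + D2 g Complex.I z = (((12 / z.im ^ 2 : ℝ) : ℂ)) * g z := by
    intro z hz
    have hzmem : z ∈ {z : ℂ | 0 < z.im} := hz
    have hs1 : D2 g 1 z = D2 f₁ 1 z - D2 f₂ 1 z := D2_sub hU hreg₁ hreg₂ hzmem 1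
    have hs2 : D2 g Complex.I z = D2 f₁ Complex.I z - D2 f₂ Complex.I z :=
      D2_sub hU hreg₁ hreg₂ hzmem Complex.I
    have hL : laplacian f₁ z = D2 f₁ 1 z + D2 f₁ Complex.I z := rfl
    have hL2 : laplacian f₂ z = D2 f₂ 1 z + D2 f₂ Complex.I z := rfl
    have he1 := heq₁ z hz
    have he2 := heq₂ z hz
    rw [hL] at he1
    rw [hL2] at he2
    have him : ((z.im : ℂ)) ≠ 0 := Complex.ofReal_ne_zero.mpr (ne_of_gt hz)
    have heqg : (z.im : ℂ) ^ 2 * (D2 g 1 z + D2 g Complex.I z) = 12 * g z := by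
      rw [hs1, hs2]
      simp only [hgdef]
      linear_combination he1 - he2
    have hcast : (((12 / z.im ^ 2 : ℝ)) : ℂ) = 12 / (z.im : ℂ) ^ 2 := by
      push_cast
      ring
    rw [hcast]
    field_simp
    linear_combination heqg
  -- periodicity of g
  have hTdet : (Matrix.of ![![(1:ℤ), 1], ![0, 1]]).det = 1 := by
    simp [Matrix.det_fin_two]
  set γT : Matrix.SpecialLinearGroup (Fin 2) ℤ := ⟨Matrix.of ![![(1:ℤ), 1], ![0, 1]], hTdet⟩
    with hγT
  have e00 : ((γT : Matrix (Fin 2) (Fin 2) ℤ) 0 0 : ℂ) = 1 := by norm_num [hγT]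
  have e01 : ((γT : Matrix (Fin 2) (Fin 2) ℤ) 0 1 : ℂ) = 1 := by norm_num [hγT]
  have e10 : ((γT : Matrix (Fin 2) (Fin 2) ℤ) 1 0 : ℂ) = 0 := by norm_num [hγT]
  have e11 : ((γT : Matrix (Fin 2) (Fin 2) ℤ) 1 1 : ℂ) = 1 := by norm_num [hγT]
  have hper : ∀ z : ℂ, 0 < z.im → g (z + 1) = g z := by
    intro z hz
    have h1 := hinv₁ γT z hz
    have h2 := hinv₂ γT z hz
    rw [e00, e01, e10, e11] at h1 h2
    have harg : ((1:ℂ) * z + 1) / ((0:ℂ) * z + 1) = z + 1 := by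
      rw [zero_mul, zero_add, one_mul, div_one]
    rw [harg] at h1 h2
    simp only [hgdef, h1, h2]
  -- invariance of g
  have hginv : ∀ γ : Matrix.SpecialLinearGroup (Fin 2) ℤ, ∀ w : ℂ, 0 < w.im →
      g ((((γ : Matrix (Fin 2) (Fin 2) ℤ) 0 0 : ℂ) * w + ((γ : Matrix (Fin 2) (Fin 2) ℤ) 0 1 : ℂ)) /
          (((γ : Matrix (Fin 2) (Fin 2) ℤ) 1 0 : ℂ) * w + ((γ : Matrix (Fin 2) (Fin 2) ℤ) 1 1 : ℂ))) = g w := by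
    intro γ w hw
    simp only [hgdef, hinv₁ γ w hw, hinv₂ γ w hw]
  -- growth bound from the fundamental domain
  set C₃ : ℝ := C₁ + C₂ with hC₃
  have hC₃pos : 0 < C₃ := by positivity
  have hgrow : ∀ z : ℂ, 0 < z.im → ‖g z‖ ≤ C₃ * z.im ^ 3 + C₃ * (z.im ^ 3)⁻¹ := by
    intro z hz
    obtain ⟨zs, hzs_im, hzs_re, hzs_norm, hzs_le, hzs_inv⟩ := exists_fundamental z hz
    have hval : g zs = g z := hzs_inv g hginv
    have h1 : ‖g zs‖ ≤ ‖f₁ zs‖ + ‖f₂ zs‖ := norm_sub_le _ _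
    have h2 : ‖f₁ zs‖ ≤ C₁ * zs.im ^ 3 := hgrowth₁ zs hzs_im hzs_re hzs_norm
    have h3 : ‖f₂ zs‖ ≤ C₂ * zs.im ^ 3 := hgrowth₂ zs hzs_im hzs_re hzs_norm
    have h4 : zs.im ^ 3 ≤ z.im ^ 3 + (z.im ^ 3)⁻¹ := by
      have h5 : zs.im ^ 3 ≤ (max z.im z.im⁻¹) ^ 3 :=
        pow_le_pow_left₀ (le_of_lt hzs_im) hzs_le 3
      have h6 : (max z.im z.im⁻¹) ^ 3 ≤ z.im ^ 3 + (z.im ^ 3)⁻¹ := by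
        rcases max_cases z.im z.im⁻¹ with ⟨hm, _⟩ | ⟨hm, _⟩
        · rw [hm]
          have : (0:ℝ) ≤ (z.im ^ 3)⁻¹ := by positivity
          linarith
        · rw [hm, ← inv_pow]
          have : (0:ℝ) ≤ z.im ^ 3 := by positivity
          linarith
      linarith
    have hz3 : (0:ℝ) < zs.im ^ 3 := by positivity
    rw [← hval]
    calc ‖g zs‖ ≤ C₁ * zs.im ^ 3 + C₂ * zs.im ^ 3 := by linarith
      _ = C₃ * zs.im ^ 3 := by rw [hC₃]; ring
      _ ≤ C₃ * (z.im ^ 3 + (z.im ^ 3)⁻¹) := by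
          apply mul_le_mul_of_nonneg_left h4 (le_of_lt hC₃pos)
      _ = C₃ * z.im ^ 3 + C₃ * (z.im ^ 3)⁻¹ := by ring
  -- first application of the master lemma
  have habs : ∀ c : ℂ, ‖c‖ ≤ 1 → ∀ z : ℂ, 0 < z.im → (c * g z).re ≤ ‖g z‖ := by
    intro c hc z hz
    calc (c * g z).re ≤ ‖c * g z‖ := Complex.re_le_norm _
      _ = ‖c‖ * ‖g z‖ := norm_mul _ _
      _ ≤ 1 * ‖g z‖ := mul_le_mul_of_nonneg_right hc (norm_nonneg _)
      _ = ‖g z‖ := one_mul _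
  have pass1 : ∀ c : ℂ, ‖c‖ ≤ 1 → ∀ z : ℂ, 0 < z.im →
      (c * g z).re ≤ C₃ * (z.im ^ 3)⁻¹ := by
    intro c hc
    apply master g hreg hlapg hper c C₃ C₃ 0 (le_of_lt hC₃pos) (le_of_lt hC₃pos) le_rfl
    intro z hz
    have := hgrow z hz
    have := habs c hc z hz
    linarith
  -- bound on the norm of g
  have hnorm : ∀ z : ℂ, 0 < z.im → ‖g z‖ ≤ 2 * C₃ * (z.im ^ 3)⁻¹ := by
    intro z hz
    have hre1 := pass1 1 (by norm_num) z hz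
    have hre2 := pass1 (-1) (by norm_num) z hz
    have him1 := pass1 (-Complex.I) (by simp) z hz
    have him2 := pass1 Complex.I (by simp) z hz
    have hre1' : (g z).re ≤ C₃ * (z.im ^ 3)⁻¹ := by rwa [one_mul] at hre1
    have hre2' : -(g z).re ≤ C₃ * (z.im ^ 3)⁻¹ := by
      have : ((-1 : ℂ) * g z).re = -(g z).re := by simp
      rwa [this] at hre2
    have him1' : (g z).im ≤ C₃ * (z.im ^ 3)⁻¹ := by
      have : ((-Complex.I) * g z).re = (g z).im := by simp
      rwa [this] at him1
    have him2' : -(g z).im ≤ C₃ * (z.im ^ 3)⁻¹ := by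
      have : (Complex.I * g z).re = -(g z).im := by simp
      rwa [this] at him2
    calc ‖g z‖ = ‖g z‖ := rfl
      _ ≤ |(g z).re| + |(g z).im| := Complex.norm_le_abs_re_add_abs_im _
      _ ≤ C₃ * (z.im ^ 3)⁻¹ + C₃ * (z.im ^ 3)⁻¹ := by
          apply add_le_add
          · rw [abs_le]; exact ⟨by linarith, hre1'⟩
          · rw [abs_le]; exact ⟨by linarith, him1'⟩
      _ = 2 * C₃ * (z.im ^ 3)⁻¹ := by ring
  -- global bound on g
  set M : ℝ := 16 * C₃ with hM
  have hMpos : 0 < M := by positivity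
  have hglob : ∀ z : ℂ, 0 < z.im → ‖g z‖ ≤ M := by
    intro z hz
    obtain ⟨zs, hzs_im, hzs_re, hzs_norm, _, hzs_inv⟩ := exists_fundamental z hz
    have hval : g zs = g z := hzs_inv g hginv
    have h1 : (1:ℝ)/2 ≤ zs.im := by
      nlinarith [abs_le.mp hzs_re, sq_nonneg zs.re, sq_nonneg zs.im]
    have h2 : (1:ℝ)/8 ≤ zs.im ^ 3 := by nlinarith
    have h3 : (zs.im ^ 3)⁻¹ ≤ 8 := by
      rw [inv_le_comm₀ (by positivity) (by norm_num)]
      linarith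
    rw [← hval]
    calc ‖g zs‖ ≤ 2 * C₃ * (zs.im ^ 3)⁻¹ := hnorm zs hzs_im
      _ ≤ 2 * C₃ * 8 := by
          apply mul_le_mul_of_nonneg_left h3 (by positivity)
      _ = M := by rw [hM]; ring
  -- second application of the master lemma : g = 0
  have pass2 : ∀ c : ℂ, ‖c‖ ≤ 1 → ∀ z : ℂ, 0 < z.im → (c * g z).re ≤ 0 := by
    intro c hc z hz
    have h := master g hreg hlapg hper c 0 0 M le_rfl le_rfl (le_of_lt hMpos)
      (fun w hw => by
        have h1 := habs c hc w hw
        have h2 := hglob w hw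
        have h3 : (0:ℝ) ≤ 0 * w.im ^ 3 + 0 * (w.im ^ 3)⁻¹ := by simp
        simp only [zero_mul, zero_add]
        linarith) z hz
    simpa using h
  -- conclusion
  intro z hz
  have hre1 := pass2 1 (by norm_num) z hz
  have hre2 := pass2 (-1) (by norm_num) z hz
  have him1 := pass2 (-Complex.I) (by simp) z hz
  have him2 := pass2 Complex.I (by simp) z hz
  rw [one_mul] at hre1
  have hre2' : -(g z).re ≤ 0 := by
    have : ((-1 : ℂ) * g z).re = -(g z).re := by simp
    rwa [this] at hre2
  have him1' : (g z).im ≤ 0 := by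
    have : ((-Complex.I) * g z).re = (g z).im := by simp
    rwa [this] at him1
  have him2' : -(g z).im ≤ 0 := by
    have : (Complex.I * g z).re = -(g z).im := by simp
    rwa [this] at him2
  have hg0 : g z = 0 := by
    apply Complex.ext
    · simp only [Complex.zero_re]; linarith
    · simp only [Complex.zero_im]; linarith
  have := hg0
  simp only [hgdef] at this
  exact sub_eq_zero.mp this
end
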